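/- arXiv:2211.14047 — 3 statements merged into one kernel-verified Lean document; each statement's English description precedes it below -/
import Mathlib

section
/- For all measurable functions f, g : ℝ → ℝ and any p ∈ [1, ∞), the L^p norm of (x,y) ↦ xy − f(x) − g(y) over [0,1]² is at least 4^{-(p+1)/p} / 4. In particular, the function (x,y) ↦ xy cannot be approximated arbitrarily well in L^p([0,1]²) by sums of univariate functions f(x) + g(y). -/
open MeasureTheory Set
open scoped ENNReal

set_option maxHeartbeats 2000000 in
theorem stmt0 (p : ℝ) (hp : 1 ≤ p) (f g : ℝ → ℝ)
    (hf : Measurable f) (hg : Measurable g) :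
    ENNReal.ofReal ((4 : ℝ) ^ (-(p + 1) / p) / 4) ≤
      eLpNorm (fun z : ℝ × ℝ => z.1 * z.2 - f z.1 - g z.2) (ENNReal.ofReal p)
        (volume.restrict (Icc (0 : ℝ) 1 ×ˢ Icc (0 : ℝ) 1)) := by
  have hp0 : (0:ℝ) < p := lt_of_lt_of_le one_pos hp
  set q : ℝ≥0∞ := ENNReal.ofReal p with hq
  have hq1 : 1 ≤ q := ENNReal.one_le_ofReal.mpr hp
  have hq0 : q ≠ 0 := by
    simp [hq, ENNReal.ofReal_eq_zero, not_le, hp0]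
  obtain ⟨e, he_def⟩ : ∃ e' : ℝ × ℝ → ℝ, e' = fun z : ℝ × ℝ => z.1 * z.2 - f z.1 - g z.2 :=
    ⟨_, rfl⟩
  rw [show (fun z : ℝ × ℝ => z.1 * z.2 - f z.1 - g z.2) = e from he_def.symm]
  have he : Measurable e := by
    rw [he_def]
    apply ((measurable_fst.mul measurable_snd).sub (hf.comp measurable_fst)).sub
      (hg.comp measurable_snd)
  set S : Set (ℝ × ℝ) := Icc (0:ℝ) 1 ×ˢ Icc (0:ℝ) 1 with hS
  set Q : Set (ℝ × ℝ) := Icc (0:ℝ) (1/2) ×ˢ Icc (0:ℝ) (1/2) with hQ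
  set ν : Measure (ℝ × ℝ) := volume.restrict Q with hν
  set E : ℝ≥0∞ := eLpNorm e q (volume.restrict S) with hE
  -- shifted copies
  have key : ∀ v : ℝ × ℝ, Icc v.1 (v.1 + 1/2) ×ˢ Icc v.2 (v.2 + 1/2) ⊆ S →
      eLpNorm (fun z => e (z + v)) q ν ≤ E := by
    intro v hsub
    set Qv : Set (ℝ × ℝ) := Icc v.1 (v.1 + 1/2) ×ˢ Icc v.2 (v.2 + 1/2) with hQv
    have hQvm : MeasurableSet Qv := (measurableSet_Icc.prod measurableSet_Icc)
    have hmp : MeasurePreserving (fun z : ℝ × ℝ => z + v) volume volume :=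
      measurePreserving_add_right volume v
    have hpre : (fun z : ℝ × ℝ => z + v) ⁻¹' Qv = Q := by
      ext z
      simp only [hQv, hQ, mem_preimage, mem_prod, Prod.fst_add, Prod.snd_add, mem_Icc]
      constructor <;> intro h <;> constructor <;> constructor <;> linarith [h.1.1, h.1.2, h.2.1, h.2.2]
    have hmp2 : MeasurePreserving (fun z : ℝ × ℝ => z + v) ν (volume.restrict Qv) := by
      rw [hν, ← hpre]
      exact hmp.restrict_preimage hQvm
    have heq : eLpNorm (fun z => e (z + v)) q ν = eLpNorm e q (volume.restrict Qv) :=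
      eLpNorm_comp_measurePreserving (he.aestronglyMeasurable) hmp2
    rw [heq, hE]
    exact eLpNorm_mono_measure e (Measure.restrict_mono hsub le_rfl)
  have h1 : eLpNorm (fun z => e (z + ((0:ℝ),(0:ℝ)))) q ν ≤ E := by
    apply key
    rw [hS]
    apply prod_mono <;> · apply Icc_subset_Icc <;> norm_num
  have h2 : eLpNorm (fun z => e (z + ((0:ℝ),(1/2:ℝ)))) q ν ≤ E := by
    apply key
    rw [hS]
    apply prod_mono <;> · apply Icc_subset_Icc <;> norm_num
  have h3 : eLpNorm (fun z => e (z + ((1/2:ℝ),(0:ℝ)))) q ν ≤ E := by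
    apply key
    rw [hS]
    apply prod_mono <;> · apply Icc_subset_Icc <;> norm_num
  have h4 : eLpNorm (fun z => e (z + ((1/2:ℝ),(1/2:ℝ)))) q ν ≤ E := by
    apply key
    rw [hS]
    apply prod_mono <;> · apply Icc_subset_Icc <;> norm_num
  -- measurability of shifts
  have hm : ∀ v : ℝ × ℝ, AEStronglyMeasurable (fun z : ℝ × ℝ => e (z + v)) ν :=
    fun v => ((he.comp (measurable_add_const v))).aestronglyMeasurable
  -- the constant identity
  have hid : (fun _ : ℝ × ℝ => (1/4 : ℝ)) =
      fun z : ℝ × ℝ => (e (z + ((0:ℝ),(0:ℝ))) - e (z + ((0:ℝ),(1/2:ℝ))))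
        - (e (z + ((1/2:ℝ),(0:ℝ))) - e (z + ((1/2:ℝ),(1/2:ℝ)))) := by
    funext z
    simp only [he_def, Prod.fst_add, Prod.snd_add]
    ring
  -- triangle inequality
  have htri : eLpNorm (fun _ : ℝ × ℝ => (1/4 : ℝ)) q ν ≤ 4 * E := by
    rw [hid]
    calc eLpNorm _ q ν ≤
        eLpNorm (fun z : ℝ × ℝ => e (z + ((0:ℝ),(0:ℝ))) - e (z + ((0:ℝ),(1/2:ℝ)))) q ν +
        eLpNorm (fun z : ℝ × ℝ => e (z + ((1/2:ℝ),(0:ℝ))) - e (z + ((1/2:ℝ),(1/2:ℝ)))) q ν :=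
          eLpNorm_sub_le ((hm _).sub (hm _)) ((hm _).sub (hm _)) hq1
      _ ≤ (eLpNorm (fun z : ℝ × ℝ => e (z + ((0:ℝ),(0:ℝ)))) q ν +
            eLpNorm (fun z : ℝ × ℝ => e (z + ((0:ℝ),(1/2:ℝ)))) q ν) +
          (eLpNorm (fun z : ℝ × ℝ => e (z + ((1/2:ℝ),(0:ℝ)))) q ν +
            eLpNorm (fun z : ℝ × ℝ => e (z + ((1/2:ℝ),(1/2:ℝ)))) q ν) :=
          add_le_add (eLpNorm_sub_le (hm _) (hm _) hq1) (eLpNorm_sub_le (hm _) (hm _) hq1)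
      _ ≤ (E + E) + (E + E) := add_le_add (add_le_add h1 h2) (add_le_add h3 h4)
      _ = 4 * E := by ring
  -- compute the norm of the constant
  have hQvol : ν univ = ENNReal.ofReal (1/4) := by
    rw [hν, Measure.restrict_apply_univ, hQ, Measure.volume_eq_prod ℝ ℝ, Measure.prod_prod,
      Real.volume_Icc, ← ENNReal.ofReal_mul (by norm_num)]
    norm_num
  have hν0 : ν ≠ 0 := by
    rw [← Measure.measure_univ_ne_zero, hQvol]
    simp
  have hconst : eLpNorm (fun _ : ℝ × ℝ => (1/4 : ℝ)) q ν =
      ENNReal.ofReal (1/4) * ENNReal.ofReal (1/4) ^ (1/p) := by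
    rw [eLpNorm_const _ hq0 hν0, hQvol, Real.enorm_eq_ofReal (by norm_num),
      hq, ENNReal.toReal_ofReal hp0.le]
  have hreal : (4:ℝ) ^ (-(p + 1) / p) = (1/4) * (1/4 : ℝ) ^ (1/p) := by
    have hexp : -(p + 1) / p = (-1 : ℝ) + (-(1/p)) := by
      field_simp
      ring
    rw [hexp, Real.rpow_add (by norm_num), Real.rpow_neg_one,
      Real.rpow_neg (by norm_num : (0:ℝ) ≤ 4),
      ← Real.inv_rpow (by norm_num : (0:ℝ) ≤ 4)]
    norm_num
  have hkey : (4 : ℝ≥0∞) * ENNReal.ofReal ((4 : ℝ) ^ (-(p + 1) / p) / 4) =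
      eLpNorm (fun _ : ℝ × ℝ => (1/4 : ℝ)) q ν := by
    rw [hconst, ← ENNReal.ofReal_ofNat, ← ENNReal.ofReal_mul (by norm_num),
      ENNReal.ofReal_rpow_of_pos (by norm_num : (0:ℝ) < 1/4),
      ← ENNReal.ofReal_mul (by norm_num)]
    congr 1
    rw [← hreal]
    ring
  have hfinal : (4 : ℝ≥0∞) * ENNReal.ofReal ((4 : ℝ) ^ (-(p + 1) / p) / 4) ≤ 4 * E := by
    rw [hkey]; exact htri
  exact (ENNReal.mul_le_mul_iff_right (by norm_num) (by norm_num)).mp hfinal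
end

section
/- Let f : [a,b] → ℝ be monotone increasing. Then the infimum over all decreasing functions g : [a,b] → ℝ of ∫ₐᵇ |f − g|^p equals the infimum over all constant functions g of ∫ₐᵇ |f − g|^p. -/
open MeasureTheory Set
open scoped ENNReal

theorem stmt2 (a b : ℝ) (hab : a < b) (p : ℝ) (hp : 1 ≤ p)
    (f : ℝ → ℝ) (hf : MonotoneOn f (Icc a b)) :
    sInf {I : ℝ≥0∞ | ∃ g : ℝ → ℝ, AntitoneOn g (Icc a b) ∧
        I = ∫⁻ t in Icc a b, ENNReal.ofReal (|f t - g t| ^ p)} =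
    sInf {I : ℝ≥0∞ | ∃ c : ℝ,
        I = ∫⁻ t in Icc a b, ENNReal.ofReal (|f t - c| ^ p)} := by
  apply le_antisymm
  · apply sInf_le_sInf
    rintro I ⟨c, rfl⟩
    exact ⟨fun _ => c, fun x _ y _ _ => le_rfl, rfl⟩
  · apply le_sInf
    rintro I ⟨g, hg, rfl⟩
    set m : ℝ → ℝ := fun t => min (f t) (g t) with hm
    have hne : (m '' Icc a b).Nonempty := ⟨m a, a, ⟨le_rfl, hab.le⟩, rfl⟩
    have hbdd : BddAbove (m '' Icc a b) := by
      refine ⟨f b, ?_⟩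
      rintro x ⟨t, ht, rfl⟩
      exact (min_le_left _ _).trans (hf ht ⟨hab.le, le_rfl⟩ ht.2)
    set c := sSup (m '' Icc a b) with hc
    have key : ∀ t ∈ Icc a b, |f t - c| ≤ |f t - g t| := by
      intro t ht
      have h1 : m t ≤ c := le_csSup hbdd ⟨t, ht, rfl⟩
      have h2 : c ≤ max (f t) (g t) := by
        apply csSup_le hne
        rintro x ⟨s, hs, rfl⟩
        rcases le_total s t with hst | hst
        · exact (min_le_left _ _).trans ((hf hs ht hst).trans (le_max_left _ _))
        · exact (min_le_right _ _).trans ((hg ht hs hst).trans (le_max_right _ _))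
      rcases le_total (f t) (g t) with h | h
      · have hmin : m t = f t := min_eq_left h
        have hmax : max (f t) (g t) = g t := max_eq_right h
        rw [hmin] at h1; rw [hmax] at h2
        rw [abs_of_nonpos (by linarith), abs_of_nonpos (by linarith)]
        linarith
      · have hmin : m t = g t := min_eq_right h
        have hmax : max (f t) (g t) = f t := max_eq_left h
        rw [hmin] at h1; rw [hmax] at h2
        rw [abs_of_nonneg (by linarith), abs_of_nonneg (by linarith)]
        linarith
    have hle : (∫⁻ t in Icc a b, ENNReal.ofReal (|f t - c| ^ p)) ≤
        ∫⁻ t in Icc a b, ENNReal.ofReal (|f t - g t| ^ p) := by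
      apply lintegral_mono_ae
      filter_upwards [ae_restrict_mem measurableSet_Icc] with t ht
      exact ENNReal.ofReal_le_ofReal
        (Real.rpow_le_rpow (abs_nonneg _) (key t ht) (by linarith))
    exact le_trans (sInf_le ⟨c, rfl⟩) hle
end

section
/- Let G : ℝⁿ → ℝ be locally Lipschitz with the property that for a.e. x, ∇G(x) ∈ {0, gr} for a fixed vector gr ∈ ℝⁿ. Then for every unit vector ξ with ξ·gr < 0 (and also for ξ·gr ≤ 0), the function t ↦ G(tξ) is nonincreasing on [0, 1]. -/
open MeasureTheory Set Filter Topology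

/-- A locally Lipschitz real function with a.e. nonpositive derivative on `[a,b]`
is nonincreasing from `a` to `b`. -/
lemma lipOnWeaken18 {α β : Type*} [PseudoEMetricSpace α] [PseudoEMetricSpace β]
    {K K' : NNReal} {f : α → β} {s : Set α} (h : LipschitzOnWith K f s) (hK : K ≤ K') :
    LipschitzOnWith K' f s :=
  fun x hx y hy => le_trans (h hx hy) (mul_le_mul_left (ENNReal.coe_le_coe.mpr hK) _)

lemma oneDimAux18 {f : ℝ → ℝ} (hf : LocallyLipschitz f) {a b : ℝ} (hab : a ≤ b)
    (hd : ∀ᵐ t : ℝ ∂volume, t ∈ Icc a b → ∃ f' ≤ (0:ℝ), HasDerivAt f f' t) :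
    f b ≤ f a := by
  have fc : Continuous f := hf.continuous
  -- uniform Lipschitz constant on a neighborhood of each point of [a,b]
  choose Kf sf hsf hlip using hf
  obtain ⟨T, -, hT⟩ := isCompact_Icc.elim_nhds_subcover (fun x => interior (sf x))
    (fun x _ => interior_mem_nhds.mpr (hsf x))
  set K : NNReal := T.sup Kf with hK
  have hKloc : ∀ t ∈ Icc a b, ∃ s' ∈ 𝓝 t, LipschitzOnWith K f s' := by
    intro t ht
    obtain ⟨x, hxT, hx⟩ := mem_iUnion₂.mp (hT ht)
    exact ⟨interior (sf x), isOpen_interior.mem_nhds hx,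
      lipOnWeaken18 ((hlip x).mono interior_subset) (Finset.le_sup hxT)⟩
  have main : ∀ ε > (0:ℝ), f b - f a ≤ ε * ((b - a) + 1) := by
    intro ε hε
    set δ : ℝ := ε / ((K:ℝ) + 1) with hδ
    have hK1 : (0:ℝ) < (K:ℝ) + 1 := by positivity
    have hδpos : 0 < δ := div_pos hε hK1
    have hNnull : volume {t | ¬ (t ∈ Icc a b → ∃ f' ≤ (0:ℝ), HasDerivAt f f' t)} = 0 :=
      ae_iff.mp hd
    obtain ⟨U, hNU, hUopen, hUvol⟩ := Set.exists_isOpen_lt_of_lt _ _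
      (show volume {t | ¬ (t ∈ Icc a b → ∃ f' ≤ (0:ℝ), HasDerivAt f f' t)}
          < ENNReal.ofReal δ by rw [hNnull]; exact ENNReal.ofReal_pos.mpr hδpos)
    set m : ℝ → ℝ := fun t => (volume (U ∩ Ioc a t)).toReal with hm
    have hfin : ∀ t, volume (U ∩ Ioc a t) ≠ ⊤ :=
      fun t => (lt_of_le_of_lt (measure_mono inter_subset_right) measure_Ioc_lt_top).ne
    have hmono : ∀ {t u : ℝ}, t ≤ u → m t ≤ m u := by
      intro t u h
      exact ENNReal.toReal_mono (hfin u)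
        (measure_mono (inter_subset_inter_right _ (Ioc_subset_Ioc_right h)))
    have hlip1 : ∀ {t u : ℝ}, t ≤ u → m u ≤ m t + (u - t) := by
      intro t u h
      have h1 : U ∩ Ioc a u ⊆ (U ∩ Ioc a t) ∪ Ioc t u := by
        rintro x ⟨hxU, hx1, hx2⟩
        rcases le_or_gt x t with h' | h'
        · exact Or.inl ⟨hxU, hx1, h'⟩
        · exact Or.inr ⟨h', hx2⟩
      have h2 : volume (U ∩ Ioc a u) ≤ volume (U ∩ Ioc a t) + volume (Ioc t u) :=
        le_trans (measure_mono h1) (measure_union_le _ _)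
      have h3 := ENNReal.toReal_mono
        (by exact (ENNReal.add_lt_top.mpr ⟨(hfin t).lt_top, measure_Ioc_lt_top⟩).ne) h2
      rwa [ENNReal.toReal_add (hfin t) measure_Ioc_lt_top.ne, Real.volume_Ioc,
        ENNReal.toReal_ofReal (by linarith)] at h3
    have hadd : ∀ {t u : ℝ}, a ≤ t → t ≤ u → Ioc t u ⊆ U → m t + (u - t) ≤ m u := by
      intro t u hat htu hsub
      have hdisj : Disjoint (U ∩ Ioc a t) (Ioc t u) :=
        Set.disjoint_left.mpr (fun x hx1 hx2 => absurd hx1.2.2 (not_le.mpr hx2.1))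
      have hun : (U ∩ Ioc a t) ∪ Ioc t u ⊆ U ∩ Ioc a u := by
        rintro x (⟨h1, h2, h3⟩ | ⟨h1, h2⟩)
        · exact ⟨h1, h2, h3.trans htu⟩
        · exact ⟨hsub ⟨h1, h2⟩, lt_of_le_of_lt hat h1, h2⟩
      have hle : volume (U ∩ Ioc a t) + volume (Ioc t u) ≤ volume (U ∩ Ioc a u) := by
        rw [← measure_union hdisj measurableSet_Ioc]
        exact measure_mono hun
      have h3 := ENNReal.toReal_mono (hfin u) hle
      rwa [ENNReal.toReal_add (hfin t) measure_Ioc_lt_top.ne, Real.volume_Ioc,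
        ENNReal.toReal_ofReal (by linarith)] at h3
    have habs : ∀ t u : ℝ, t ≤ u → |m u - m t| ≤ |u - t| := by
      intro t u h
      rw [abs_of_nonneg (by linarith [hmono h] : (0:ℝ) ≤ m u - m t),
        abs_of_nonneg (by linarith : (0:ℝ) ≤ u - t)]
      linarith [hlip1 h]
    have hmcont : Continuous m := by
      refine (LipschitzWith.of_dist_le_mul (K := 1) fun t u => ?_).continuous
      rw [NNReal.coe_one, one_mul, Real.dist_eq, Real.dist_eq]
      rcases le_total t u with h | h
      · rw [abs_sub_comm (m t), abs_sub_comm t]; exact habs t u h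
      · exact habs u t h
    set s : Set ℝ := {t | f t - f a ≤ ε * (t - a) + (K:ℝ) * m t} with hs
    have hclosed : IsClosed (s ∩ Icc a b) := by
      rw [inter_comm]
      have hcont : ContinuousOn
          (fun t => (f t - f a, ε * (t - a) + (K:ℝ) * m t)) (Icc a b) :=
        Continuous.continuousOn (by fun_prop)
      exact hcont.preimage_isClosed_of_isClosed isClosed_Icc
        OrderClosedTopology.isClosed_le'
    have hKnn : (0:ℝ) ≤ K := K.coe_nonneg
    have ha : a ∈ s := by
      have hma : m a = 0 := by simp [hm]
      simp [hs, hma]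
    have main2 : Icc a b ⊆ s := by
      apply hclosed.Icc_subset_of_forall_exists_gt ha
      rintro t ⟨hts, hta, htb⟩ v hv
      set w := min v b with hw
      have htw : t < w := lt_min hv htb
      have hwb : w ≤ b := min_le_right _ _
      by_cases htU : t ∈ U
      · obtain ⟨r, hr, hball⟩ := Metric.isOpen_iff.mp hUopen t htU
        obtain ⟨s', hs'mem, hlipK⟩ := hKloc t ⟨hta, htb.le⟩
        obtain ⟨r', hr', hball'⟩ := Metric.mem_nhds_iff.mp hs'mem
        set r2 := min r r' with hr2
        have hr2pos : 0 < r2 := lt_min hr hr'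
        set u := min (t + r2 / 2) w with hu
        have htu : t < u := lt_min (by linarith) htw
        have huw : u ≤ w := min_le_right _ _
        have hsubball : Icc t u ⊆ Metric.ball t r2 := by
          intro x hx
          rw [Metric.mem_ball, Real.dist_eq, abs_of_nonneg (by linarith [hx.1])]
          have h5 : u ≤ t + r2 / 2 := min_le_left _ _
          linarith [hx.2]
        have hIocU : Ioc t u ⊆ U := fun x hx =>
          hball ((Metric.ball_subset_ball (min_le_left r r')) (hsubball ⟨hx.1.le, hx.2⟩))
        have hts' : t ∈ s' := hball' (Metric.mem_ball_self hr')
        have hus' : u ∈ s' := hball' ((Metric.ball_subset_ball (min_le_right r r'))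
          (hsubball ⟨htu.le, le_rfl⟩))
        have hfd : f u - f t ≤ (K:ℝ) * (u - t) := by
          have h6 := (lipschitzOnWith_iff_dist_le_mul.mp hlipK) u hus' t hts'
          rw [Real.dist_eq, Real.dist_eq, abs_of_pos (by linarith : (0:ℝ) < u - t)] at h6
          exact (le_abs_self _).trans h6
        refine ⟨u, ?_, htu, huw.trans (min_le_left _ _)⟩
        have hmm := hadd hta htu.le hIocU
        simp only [hs, mem_setOf_eq] at hts ⊢
        nlinarith [mul_le_mul_of_nonneg_left hmm hKnn,
          mul_nonneg hε.le (by linarith : (0:ℝ) ≤ u - t)]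
      · have htN : ∃ f' ≤ (0:ℝ), HasDerivAt f f' t := by
          by_contra hcon
          exact htU (hNU (fun h => hcon (h ⟨hta, htb.le⟩)))
        obtain ⟨f', hf'le, hder⟩ := htN
        have hslope : Tendsto (slope f t) (𝓝[>] t) (𝓝 f') :=
          (hasDerivAt_iff_tendsto_slope.mp hder).mono_left
            (nhdsWithin_mono t (fun x hx => ne_of_gt hx))
        have hev : ∀ᶠ x in 𝓝[>] t, slope f t x < ε :=
          hslope (Iio_mem_nhds (lt_of_le_of_lt hf'le hε))
        have hmem : Ioc t w ∈ 𝓝[>] t := Ioc_mem_nhdsGT_of_mem ⟨le_rfl, htw⟩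
        obtain ⟨u, hu1, hu2⟩ := (hev.and hmem).exists
        have htu : (0:ℝ) < u - t := by linarith [hu2.1]
        have hfd : f u - f t ≤ ε * (u - t) := by
          rw [slope_def_field] at hu1
          exact le_of_lt ((div_lt_iff₀ htu).mp hu1)
        refine ⟨u, ?_, hu2.1, hu2.2.trans (min_le_left _ _)⟩
        have hmm := hmono (le_of_lt hu2.1)
        simp only [hs, mem_setOf_eq] at hts ⊢
        nlinarith [mul_le_mul_of_nonneg_left hmm hKnn]
    have hb : b ∈ s := main2 ⟨hab, le_rfl⟩
    have hmb : m b ≤ δ := by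
      have h1 : volume (U ∩ Ioc a b) ≤ ENNReal.ofReal δ :=
        le_of_lt (lt_of_le_of_lt (measure_mono inter_subset_left) hUvol)
      exact ENNReal.toReal_le_of_le_ofReal hδpos.le h1
    have hKδ : (K:ℝ) * δ ≤ ε := by
      have h2 : δ * ((K:ℝ) + 1) = ε := div_mul_cancel₀ ε hK1.ne'
      nlinarith [hδpos.le, K.coe_nonneg]
    simp only [hs, mem_setOf_eq] at hb
    nlinarith [mul_le_mul_of_nonneg_left hmb (K.coe_nonneg)]
  have hfin : f b - f a ≤ 0 := by
    refine le_of_forall_pos_le_add (fun ε' hε' => ?_)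
    have hba : (0:ℝ) < (b - a) + 1 := by linarith
    have h7 := main (ε' / ((b - a) + 1)) (div_pos hε' hba)
    rw [div_mul_cancel₀ ε' hba.ne'] at h7
    linarith
  linarith

theorem stmt18 (n : ℕ) (G : EuclideanSpace ℝ (Fin n) → ℝ)
    (hG : LocallyLipschitz G)
    (gr : EuclideanSpace ℝ (Fin n))
    (hgrad : ∀ᵐ x : EuclideanSpace ℝ (Fin n) ∂volume, DifferentiableAt ℝ G x →
      (fderiv ℝ G x = 0 ∨ ∀ y, fderiv ℝ G x y = inner ℝ gr y)) :
    ∀ ξ : EuclideanSpace ℝ (Fin n), ‖ξ‖ = 1 → inner ℝ ξ gr ≤ (0 : ℝ) →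
      AntitoneOn (fun t : ℝ => G (t • ξ)) (Icc 0 1) := by
  intro ξ hξ hinner
  -- Rademacher: G is differentiable a.e.
  have hdiff : ∀ᵐ x : EuclideanSpace ℝ (Fin n) ∂volume, DifferentiableAt ℝ G x := by
    rw [ae_iff]
    apply measure_null_of_locally_null
    intro x _
    obtain ⟨K, t, ht, hlip⟩ := hG x
    refine ⟨{x | ¬DifferentiableAt ℝ G x} ∩ interior t,
      inter_mem_nhdsWithin _ (interior_mem_nhds.mpr ht), ?_⟩
    · have hae : ∀ᵐ y ∂(volume : Measure (EuclideanSpace ℝ (Fin n))),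
          y ∈ t → DifferentiableWithinAt ℝ G t y :=
        hlip.ae_differentiableWithinAt_of_mem
      apply measure_mono_null _ (ae_iff.mp hae)
      rintro y ⟨hy2, hy1⟩
      simp only [mem_setOf_eq]
      intro h
      exact hy2 ((h (interior_subset hy1)).differentiableAt
        (mem_interior_iff_mem_nhds.mp hy1))
  have hA : ∀ᵐ x : EuclideanSpace ℝ (Fin n) ∂volume,
      DifferentiableAt ℝ G x ∧
        (fderiv ℝ G x = 0 ∨ ∀ y, fderiv ℝ G x y = inner ℝ gr y) := by
    filter_upwards [hdiff, hgrad] with x h1 h2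
    exact ⟨h1, h2 h1⟩
  obtain ⟨N, hN0N, hNmeas, hNnull⟩ := exists_measurable_superset_of_null (ae_iff.mp hA)
  -- Fubini: for a.e. v, the line t ↦ t ξ + v meets N in a null set
  have hψ : Continuous (fun p : ℝ × EuclideanSpace ℝ (Fin n) => p.1 • ξ + p.2) :=
    (continuous_fst.smul continuous_const).add continuous_snd
  set T : Set (ℝ × EuclideanSpace ℝ (Fin n)) :=
    (fun p : ℝ × EuclideanSpace ℝ (Fin n) => p.1 • ξ + p.2) ⁻¹' N with hTdef
  have hTmeas : MeasurableSet T := hψ.measurable hNmeas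
  have hTnull : (volume.prod volume) T = 0 := by
    rw [Measure.prod_apply hTmeas]
    have h8 : ∀ t : ℝ, volume (Prod.mk t ⁻¹' T) = 0 := by
      intro t
      have h9 : Prod.mk t ⁻¹' T = (fun v => t • ξ + v) ⁻¹' N := rfl
      rw [h9, measure_preimage_add]
      exact hNnull
    simp [h8]
  have hSnull : (volume.prod volume)
      (Prod.swap ⁻¹' T : Set (EuclideanSpace ℝ (Fin n) × ℝ)) = 0 := by
    rw [(Measure.measurePreserving_swap (μ := (volume : Measure (EuclideanSpace ℝ (Fin n)))) (ν := (volume : Measure ℝ))).measure_preimage hTmeas.nullMeasurableSet]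
    exact hTnull
  have hsec : ∀ᵐ v : EuclideanSpace ℝ (Fin n) ∂volume,
      volume {t : ℝ | t • ξ + v ∈ N} = 0 := by
    have h10 := Measure.measure_ae_null_of_prod_null hSnull
    filter_upwards [h10] with v hv
    exact hv
  intro p hp q hq hpq
  -- the key estimate along shifted lines
  have key : ∀ v : EuclideanSpace ℝ (Fin n), volume {t : ℝ | t • ξ + v ∈ N} = 0 →
      G (q • ξ + v) ≤ G (p • ξ + v) := by
    intro v hv
    have hL : LipschitzWith 1 (fun t : ℝ => t • ξ + v) := by
      apply LipschitzWith.of_dist_le_mul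
      intro t u
      rw [NNReal.coe_one, one_mul, dist_eq_norm, Real.dist_eq]
      have h11 : (t • ξ + v) - (u • ξ + v) = (t - u) • ξ := by
        rw [sub_smul]; abel
      rw [h11, norm_smul, hξ, mul_one, Real.norm_eq_abs]
    have hfl : LocallyLipschitz (fun t : ℝ => G (t • ξ + v)) :=
      hG.comp hL.locallyLipschitz
    have hae : ∀ᵐ t : ℝ ∂volume, t ∈ Icc p q →
        ∃ f' ≤ (0:ℝ), HasDerivAt (fun t : ℝ => G (t • ξ + v)) f' t := by
      have hnm : ∀ᵐ t : ℝ ∂volume, t • ξ + v ∉ N := by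
        rw [ae_iff]
        simpa using hv
      filter_upwards [hnm] with t ht _
      have hgood : DifferentiableAt ℝ G (t • ξ + v) ∧
          (fderiv ℝ G (t • ξ + v) = 0 ∨
            ∀ y, fderiv ℝ G (t • ξ + v) y = inner ℝ gr y) := by
        by_contra hcon
        exact ht (hN0N hcon)
      obtain ⟨hdx, hcase⟩ := hgood
      have hline : HasDerivAt (fun s : ℝ => s • ξ + v) ξ t := by
        simpa using ((hasDerivAt_id t).smul_const ξ).add_const v
      refine ⟨fderiv ℝ G (t • ξ + v) ξ, ?_, hdx.hasFDerivAt.comp_hasDerivAt t hline⟩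
      rcases hcase with h | h
      · rw [h]; simp
      · rw [h ξ, real_inner_comm]
        exact hinner
    exact oneDimAux18 hfl hpq hae
  -- pass to the limit v → 0 by density
  have hCc : IsClosed {v : EuclideanSpace ℝ (Fin n) | G (q • ξ + v) ≤ G (p • ξ + v)} :=
    isClosed_le (hG.continuous.comp (continuous_const.add continuous_id))
      (hG.continuous.comp (continuous_const.add continuous_id))
  have hdense : Dense {v : EuclideanSpace ℝ (Fin n) | G (q • ξ + v) ≤ G (p • ξ + v)} := by
    apply Measure.dense_of_ae (μ := (volume : Measure (EuclideanSpace ℝ (Fin n))))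
    filter_upwards [hsec] with v hv
    exact key v hv
  have h0 : (0 : EuclideanSpace ℝ (Fin n)) ∈
      {v : EuclideanSpace ℝ (Fin n) | G (q • ξ + v) ≤ G (p • ξ + v)} :=
    hCc.closure_eq ▸ hdense 0
  simpa using h0
end
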